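/- Let 1 < p ≤ 9/8 and let l, n₁, n_k be positive integers with n₁ + n_k = 2l + 1 and n₁ ≤ l − 1 (hence n_k ≥ l + 2). If a₁, a_k > 0 satisfy l·(n₁a₁/l)^p + (l+1)·(n_k a_k/(l+1))^p ≥ n₁·a₁^p + n_k·a_k^p, then n_k·a_k^p / (n₁·a₁^p) > (l+1)/l. -/

import Mathlib

set_option maxHeartbeats 1000000 in
theorem stmt_4 (p : ℝ) (hp1 : 1 < p) (hp2 : p ≤ 9 / 8)
    (l n₁ nk : ℕ) (hl : 0 < l) (hn₁ : 0 < n₁) (hnk : 0 < nk)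
    (hsum : n₁ + nk = 2 * l + 1) (hn₁l : n₁ ≤ l - 1)
    (a₁ ak : ℝ) (ha₁ : 0 < a₁) (hak : 0 < ak)
    (h : (l : ℝ) * ((n₁ * a₁ / l) ^ p) + ((l : ℝ) + 1) * ((nk * ak / ((l : ℝ) + 1)) ^ p)
        ≥ n₁ * a₁ ^ p + nk * ak ^ p) :
    (nk : ℝ) * ak ^ p / (n₁ * a₁ ^ p) > ((l : ℝ) + 1) / l := by
  set L : ℝ := (l : ℝ) with hLdef
  set N1 : ℝ := (n₁ : ℝ) with hN1def
  set NK : ℝ := (nk : ℝ) with hNKdef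
  have hln : n₁ + 1 ≤ l := by omega
  have hN1L : N1 ≤ L - 1 := by
    have : (n₁ : ℝ) + 1 ≤ (l : ℝ) := by exact_mod_cast hln
    linarith
  have hN11 : (1 : ℝ) ≤ N1 := by exact_mod_cast Nat.one_le_cast.mpr hn₁
  have hL2 : (2 : ℝ) ≤ L := by linarith
  have hL0 : (0 : ℝ) < L := by linarith
  have hL10 : (0 : ℝ) < L + 1 := by linarith
  have hN10 : (0 : ℝ) < N1 := by linarith
  have hsumR : N1 + NK = 2 * L + 1 := by
    rw [hN1def, hNKdef, hLdef]
    exact_mod_cast hsum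
  have hNK0 : (0 : ℝ) < NK := by linarith
  set q : ℝ := p - 1 with hqdef
  have hq0 : 0 < q := by rw [hqdef]; linarith
  have hq1 : q < 1 := by rw [hqdef]; linarith
  set X : ℝ := (N1 / L) ^ q with hXdef
  set Y : ℝ := (NK / (L + 1)) ^ q with hYdef
  -- rewrite the hypothesis
  have e1 : L * ((N1 * a₁ / L) ^ p) = N1 * a₁ ^ p * X := by
    rw [hXdef, show N1 * a₁ / L = (N1 / L) * a₁ by ring,
      Real.mul_rpow (by positivity) ha₁.le,
      show p = 1 + q by rw [hqdef]; ring, Real.rpow_add (by positivity), Real.rpow_one]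
    field_simp
  have e2 : (L + 1) * ((NK * ak / (L + 1)) ^ p) = NK * ak ^ p * Y := by
    rw [hYdef, show NK * ak / (L + 1) = (NK / (L + 1)) * ak by ring,
      Real.mul_rpow (by positivity) hak.le,
      show p = 1 + q by rw [hqdef]; ring, Real.rpow_add (by positivity), Real.rpow_one]
    field_simp
  rw [e1, e2] at h
  set A : ℝ := N1 * a₁ ^ p with hAdef
  set B : ℝ := NK * ak ^ p with hBdef
  have hA : 0 < A := by rw [hAdef]; positivity
  have hB : 0 < B := by rw [hBdef]; positivity
  have key : B * (Y - 1) ≥ A * (1 - X) := by linarith [h]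
  -- Bernoulli bound for X
  have hx' : q * (L - N1) < L * (1 - X) := by
    have ht1 : N1 / L = 1 + (N1 - L) / L := by field_simp; ring
    have hs1 : (-1 : ℝ) ≤ (N1 - L) / L := by
      rw [le_div_iff₀ hL0]; linarith
    have hs2 : (N1 - L) / L ≠ 0 :=
      div_ne_zero (sub_ne_zero_of_ne (by intro hc; linarith)) hL0.ne'
    have hb := rpow_one_add_lt_one_add_mul_self hs1 hs2 hq0 hq1
    have hbX : X < 1 + q * ((N1 - L) / L) := by rw [hXdef, ht1]; exact hb
    have h3 := mul_lt_mul_of_pos_left hbX hL0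
    have h4 : L * (1 + q * ((N1 - L) / L)) = L + q * (N1 - L) := by field_simp
    rw [h4] at h3
    nlinarith [h3]
  -- Bernoulli bound for Y
  have hy' : (L + 1) * (Y - 1) < q * (L - N1) := by
    have ht2 : NK / (L + 1) = 1 + (L - N1) / (L + 1) := by
      field_simp; linarith
    have hs1 : (-1 : ℝ) ≤ (L - N1) / (L + 1) := by
      rw [le_div_iff₀ hL10]; linarith
    have hs2 : (L - N1) / (L + 1) ≠ 0 :=
      div_ne_zero (sub_ne_zero_of_ne (by intro hc; linarith)) hL10.ne'
    have hb := rpow_one_add_lt_one_add_mul_self hs1 hs2 hq0 hq1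
    have hbY : Y < 1 + q * ((L - N1) / (L + 1)) := by rw [hYdef, ht2]; exact hb
    have h3 := mul_lt_mul_of_pos_left hbY hL10
    have h4 : (L + 1) * (1 + q * ((L - N1) / (L + 1))) = (L + 1) + q * (L - N1) := by
      field_simp
    rw [h4] at h3
    nlinarith [h3]
  have hX1 : X < 1 :=
    Real.rpow_lt_one (by positivity) (by rw [div_lt_one hL0]; linarith) hq0
  have hY1 : 1 < Y := by
    have hk0 : 0 < B * (Y - 1) := lt_of_lt_of_le (mul_pos hA (by linarith)) key
    rcases mul_pos_iff.mp hk0 with ⟨_, h2⟩ | ⟨h2, _⟩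
    · linarith
    · linarith
  rw [gt_iff_lt, div_lt_div_iff₀ hL0 hA]
  by_contra hcon
  push_neg at hcon
  have p1 : 0 ≤ ((L + 1) * A - B * L) * (Y - 1) :=
    mul_nonneg (by linarith) (by linarith)
  have p2 : L * (A * (1 - X)) ≤ L * (B * (Y - 1)) :=
    mul_le_mul_of_nonneg_left key hL0.le
  have p3 : A * (q * (L - N1)) < A * (L * (1 - X)) :=
    mul_lt_mul_of_pos_left hx' hA
  have p4 : A * ((L + 1) * (Y - 1)) < A * (q * (L - N1)) :=
    mul_lt_mul_of_pos_left hy' hA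
  nlinarith [p1, p2, p3, p4]
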